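/- Let 0 < b ≤ 1 and α > 0. There exists a constant C > 0 such that for every radially symmetric u ∈ H¹(ℝ²) and almost every x ∈ ℝ², |x|^b |e^{u(x)} - 1 - u(x)| ≤ C ‖u‖_{H¹}^{2b} (|u(x)|^{2(1-b)} + e^{α u(x)²} - 1). -/

import Mathlib

open MeasureTheory

noncomputable def H1Norm {N : ℕ} (u : EuclideanSpace ℝ (Fin N) → ℝ) : ℝ :=
  Real.sqrt (((eLpNorm u 2 volume).toReal) ^ 2 +
    ((eLpNorm (fun x => ‖fderiv ℝ u x‖) 2 volume).toReal) ^ 2)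



open Metric Set
open scoped ENNReal NNReal

variable {E : Type*} [NormedAddCommGroup E] [NormedSpace ℝ E]
    [MeasurableSpace E] [BorelSpace E] [FiniteDimensional ℝ E] [Nontrivial E]

lemma lintegral_norm_radial (μ : Measure E) [μ.IsAddHaarMeasure] (f : ℝ → ENNReal)
    (hf : Measurable f) :
    ∫⁻ x, f ‖x‖ ∂μ = μ.toSphere Set.univ *
      ∫⁻ y in Ioi (0:ℝ), ENNReal.ofReal (y ^ (Module.finrank ℝ E - 1)) * f y := by
  have hm : Measurable fun p : sphere (0:E) 1 × Ioi (0:ℝ) => f p.2 :=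
    hf.comp (measurable_subtype_coe.comp measurable_snd)
  calc ∫⁻ x, f ‖x‖ ∂μ = ∫⁻ x in ({0}ᶜ : Set E), f ‖x‖ ∂μ := by
        rw [MeasureTheory.restrict_compl_singleton]
    _ = ∫⁻ x : ({0}ᶜ : Set E), f ‖x.1‖ ∂(μ.comap Subtype.val) :=
        (lintegral_subtype_comap (measurableSet_singleton 0).compl _).symm
    _ = ∫⁻ p : sphere (0:E) 1 × Ioi (0:ℝ), f p.2
          ∂(μ.toSphere.prod (Measure.volumeIoiPow (Module.finrank ℝ E - 1))) := by
        rw [← (μ.measurePreserving_homeomorphUnitSphereProd).lintegral_comp hm]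
        simp only [homeomorphUnitSphereProd_apply_snd_coe]
    _ = μ.toSphere Set.univ *
          ∫⁻ y : Ioi (0:ℝ), f y ∂(Measure.volumeIoiPow (Module.finrank ℝ E - 1)) := by
        rw [lintegral_prod _ hm.aemeasurable]
        simp [lintegral_const, mul_comm]
    _ = _ := by
        rw [Measure.volumeIoiPow]
        rw [lintegral_withDensity_eq_lintegral_mul (Measure.comap Subtype.val volume)
          (f := fun r : Ioi (0:ℝ) => ENNReal.ofReal (r.1 ^ (Module.finrank ℝ E - 1)))
          (g := fun y : Ioi (0:ℝ) => f ↑y)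
          (by measurability) (hf.comp measurable_subtype_coe)]
        rw [← lintegral_subtype_comap measurableSet_Ioi
          (fun y => ENNReal.ofReal (y ^ (Module.finrank ℝ E - 1)) * f y)]
        rfl

lemma norm_fderiv_radial {E : Type*} [NormedAddCommGroup E] [InnerProductSpace ℝ E]
    [CompleteSpace E] (u : E → ℝ) (hrad : ∀ x y, ‖x‖ = ‖y‖ → u x = u y)
    (hu : Differentiable ℝ u) {x y : E} (h : ‖x‖ = ‖y‖) :
    ‖fderiv ℝ u x‖ = ‖fderiv ℝ u y‖ := by
  set R : E ≃ₗᵢ[ℝ] E := Submodule.reflection (ℝ ∙ (x - y))ᗮ with hR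
  have hRx : R x = y := Submodule.reflection_sub h
  have huR : u ∘ R = u := funext fun z => hrad (R z) z (R.norm_map z)
  have hcomp : HasFDerivAt (u ∘ R)
      ((fderiv ℝ u (R x)).comp R.toLinearIsometry.toContinuousLinearMap) x :=
    (hu (R x)).hasFDerivAt.comp x
      (R.toLinearIsometry.toContinuousLinearMap.hasFDerivAt)
  rw [huR] at hcomp
  rw [hcomp.fderiv, hRx.symm]
  exact ContinuousLinearMap.opNorm_comp_linearIsometryEquiv (fderiv ℝ u (R x)) R

-- lintegral of squared function equals ofReal-squared lintegral, and eLpNorm facts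
lemma elp_sq (f : E → ℝ) (μ : Measure E) (hf : MemLp f 2 μ) :
    (∫⁻ x, ENNReal.ofReal (f x ^ 2) ∂μ) ≠ ⊤ ∧
    (eLpNorm f 2 μ).toReal ^ 2 = (∫⁻ x, ENNReal.ofReal (f x ^ 2) ∂μ).toReal := by
  have h2 : eLpNorm f 2 μ = (∫⁻ x, ENNReal.ofReal (f x ^ 2) ∂μ) ^ (1/2 : ℝ) := by
    rw [eLpNorm_eq_lintegral_rpow_enorm_toReal (by norm_num) (by norm_num)]
    have h22 : ((2:ENNReal)).toReal = ((2:ℕ):ℝ) := by norm_num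
    rw [h22]
    have : ∀ x : E, ‖f x‖ₑ ^ ((2:ℕ):ℝ) = ENNReal.ofReal (f x ^ 2) := fun x => by
      rw [Real.enorm_eq_ofReal_abs, ENNReal.rpow_natCast,
        ← ENNReal.ofReal_pow (abs_nonneg _), sq_abs]
    rw [lintegral_congr this]
    norm_num
  have hfin : (∫⁻ x, ENNReal.ofReal (f x ^ 2) ∂μ) ≠ ⊤ := by
    intro htop
    have := hf.2
    rw [h2, htop, ENNReal.top_rpow_of_pos (by norm_num)] at this
    exact (lt_irrefl _ this).elim
  refine ⟨hfin, ?_⟩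
  rw [h2, ← ENNReal.toReal_rpow]
  rw [← Real.rpow_natCast ((∫⁻ x, ENNReal.ofReal (f x ^ 2) ∂μ).toReal ^ (1/2:ℝ)) 2,
    ← Real.rpow_mul ENNReal.toReal_nonneg]
  norm_num

noncomputable def straussK : ℝ :=
  2 / ((volume : Measure (EuclideanSpace ℝ (Fin 2))).toSphere Set.univ).toReal

lemma csphere_pos : 0 < ((volume : Measure (EuclideanSpace ℝ (Fin 2))).toSphere Set.univ).toReal := by
  have h1 : (volume : Measure (EuclideanSpace ℝ (Fin 2))).toSphere Set.univ ≠ ⊤ :=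
    measure_ne_top _ _
  have h2 : (volume : Measure (EuclideanSpace ℝ (Fin 2))).toSphere Set.univ ≠ 0 := by
    rw [Measure.toSphere_apply_univ]
    have hb : 0 < (volume : Measure (EuclideanSpace ℝ (Fin 2))) (ball 0 1) :=
      measure_ball_pos _ _ one_pos
    refine mul_ne_zero ?_ hb.ne'
    simp [finrank_euclideanSpace]
  exact ENNReal.toReal_pos h2 h1

lemma straussK_pos : 0 < straussK := by
  have := csphere_pos
  unfold straussK
  positivity

set_option maxHeartbeats 2000000 in
lemma strauss (u : EuclideanSpace ℝ (Fin 2) → ℝ)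
    (hrad : ∀ x y, ‖x‖ = ‖y‖ → u x = u y)
    (hu : Differentiable ℝ u)
    (hu2 : MemLp u 2 volume)
    (hdu2 : MemLp (fun x => ‖fderiv ℝ u x‖) 2 volume) (x : EuclideanSpace ℝ (Fin 2)) :
    ‖x‖ * u x ^ 2 ≤ straussK * H1Norm u ^ 2 := by
  classical
  set μ : Measure (EuclideanSpace ℝ (Fin 2)) := volume with hμ
  set c : ENNReal := μ.toSphere Set.univ with hc
  -- the one-dimensional profiles
  set e1 : EuclideanSpace ℝ (Fin 2) := EuclideanSpace.single 0 1 with he1def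
  have he1 : ‖e1‖ = 1 := by simp [he1def, EuclideanSpace.norm_single]
  set g : ℝ → ℝ := fun r => u (r • e1) with hgdef
  set g' : ℝ → ℝ := fun r => fderiv ℝ u (r • e1) e1 with hg'def
  set G : ℝ → ℝ := fun r => ‖fderiv ℝ u (r • e1)‖ with hGdef
  have hline : Continuous fun r : ℝ => r • e1 := by continuity
  have hgx : ∀ z : EuclideanSpace ℝ (Fin 2), u z = g ‖z‖ := fun z =>
    hrad z (‖z‖ • e1) (by rw [norm_smul, he1]; simp [abs_of_nonneg (norm_nonneg z)])
  have hGx : ∀ z : EuclideanSpace ℝ (Fin 2), ‖fderiv ℝ u z‖ = G ‖z‖ := fun z =>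
    norm_fderiv_radial u hrad hu
      (by rw [norm_smul, he1]; simp [abs_of_nonneg (norm_nonneg z)])
  have hgcont : Continuous g := hu.continuous.comp hline
  have hg'meas : Measurable g' :=
    (measurable_fderiv_apply_const ℝ u e1).comp hline.measurable
  have hGmeas : Measurable G := (measurable_fderiv ℝ u).norm.comp hline.measurable
  have hGnn : ∀ r, 0 ≤ G r := fun r => norm_nonneg _
  have hmg : Measurable fun y : ℝ => ENNReal.ofReal (y * g y ^ 2) :=
    (measurable_id.mul (hgcont.measurable.pow_const 2)).ennreal_ofReal
  have hmG : Measurable fun y : ℝ => ENNReal.ofReal (y * G y ^ 2) :=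
    (measurable_id.mul (hGmeas.pow_const 2)).ennreal_ofReal
  have hg'G : ∀ r, |g' r| ≤ G r := fun r => by
    calc |g' r| = ‖fderiv ℝ u (r • e1) e1‖ := rfl
      _ ≤ ‖fderiv ℝ u (r • e1)‖ * ‖e1‖ := ContinuousLinearMap.le_opNorm _ _
      _ = G r := by rw [he1, mul_one]
  have hgderiv : ∀ r : ℝ, HasDerivAt g (g' r) r := fun r => by
    have h1 : HasDerivAt (fun s : ℝ => s • e1) ((1:ℝ) • e1) r :=
      (hasDerivAt_id r).smul_const e1
    have h2 := ((hu (r • e1)).hasFDerivAt).comp_hasDerivAt r h1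
    exact (by simpa using h2 : HasDerivAt (u ∘ fun s : ℝ => s • e1) (fderiv ℝ u (r • e1) e1) r)
  -- the radial integrals
  set A : ENNReal := ∫⁻ z, ENNReal.ofReal (u z ^ 2) ∂μ with hA
  set B : ENNReal := ∫⁻ z, ENNReal.ofReal (‖fderiv ℝ u z‖ ^ 2) ∂μ with hB
  set a : ENNReal := ∫⁻ y in Ioi (0:ℝ), ENNReal.ofReal (y * g y ^ 2) with ha
  set bb : ENNReal := ∫⁻ y in Ioi (0:ℝ), ENNReal.ofReal (y * G y ^ 2) with hbb
  have hdim : Module.finrank ℝ (EuclideanSpace ℝ (Fin 2)) - 1 = 1 := by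
    simp [finrank_euclideanSpace]
  have polar : ∀ f : ℝ → ℝ, Measurable f → (∀ r, 0 ≤ f r) →
      ∫⁻ z, ENNReal.ofReal (f ‖z‖) ∂μ =
        c * ∫⁻ y in Ioi (0:ℝ), ENNReal.ofReal (y * f y) := by
    intro f hf hfnn
    rw [lintegral_norm_radial μ (fun y => ENNReal.ofReal (f y))
      (ENNReal.measurable_ofReal.comp hf), hdim]
    congr 1
    refine setLIntegral_congr_fun measurableSet_Ioi ?_
    intro y hy
    simp only [pow_one]; rw [← ENNReal.ofReal_mul (le_of_lt hy)]
  have hApolar : A = c * a := by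
    rw [hA, ha, ← polar (fun y => g y ^ 2) (hgcont.pow 2).measurable (fun r => sq_nonneg _)]
    exact lintegral_congr fun z => by rw [hgx z]
  have hBpolar : B = c * bb := by
    rw [hB, hbb, ← polar (fun y => G y ^ 2) (hGmeas.pow_const 2) (fun r => sq_nonneg _)]
    exact lintegral_congr fun z => by rw [hGx z]
  have hAfin : A ≠ ⊤ := (elp_sq u μ hu2).1
  have hBfin : B ≠ ⊤ := (elp_sq (fun z => ‖fderiv ℝ u z‖) μ hdu2).1
  have hcfin : c ≠ ⊤ := measure_ne_top _ _
  have hcpos : c ≠ 0 := by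
    intro h0
    have h := csphere_pos
    rw [show (volume : Measure (EuclideanSpace ℝ (Fin 2))).toSphere Set.univ = c from rfl,
      h0] at h
    simp at h
  have hafin : a ≠ ⊤ := by
    intro h
    rw [h, ENNReal.mul_top hcpos] at hApolar
    exact hAfin hApolar
  have hbbfin : bb ≠ ⊤ := by
    intro h
    rw [h, ENNReal.mul_top hcpos] at hBpolar
    exact hBfin hBpolar
  have habfin : a + bb ≠ ⊤ := by
    simp [ENNReal.add_ne_top, hafin, hbbfin]
  -- core radial estimate
  have key : ∀ r : ℝ, 0 < r → r * g r ^ 2 ≤ (a + bb).toReal := by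
    intro r hr
    set W : ENNReal := ENNReal.ofReal (1/r) * (a + bb) with hWdef
    have hWfin : W ≠ ⊤ := ENNReal.mul_ne_top ENNReal.ofReal_ne_top habfin
    -- integrability of g' on Ioc r R
    have hg'int : ∀ R : ℝ, r ≤ R → IntervalIntegrable g' volume r R := by
      intro R hrR
      rw [intervalIntegrable_iff_integrableOn_Ioc_of_le hrR]
      refine ⟨hg'meas.aestronglyMeasurable, ?_⟩
      rw [hasFiniteIntegral_iff_norm]
      have hle : ∫⁻ y in Ioc r R, ENNReal.ofReal ‖g' y‖ ≤
          ∫⁻ y in Ioc r R, (ENNReal.ofReal (1/r) * ENNReal.ofReal (y * G y ^ 2) + 1) := by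
        refine setLIntegral_mono ((hmG.const_mul _).add measurable_const) ?_
        intro y hy
        have hry : r < y := hy.1
        have h1 : r * G y ≤ y * G y ^ 2 + r := by
          nlinarith [sq_nonneg (G y - 1), hGnn y, mul_nonneg (sub_nonneg.2 hry.le)
            (sq_nonneg (G y))]
        have h3 : G y ≤ (y * G y ^ 2 + r) / r := by
          rw [le_div_iff₀ hr]; linarith [h1]
        have h4 : (y * G y ^ 2 + r) / r = 1/r * (y * G y ^ 2) + 1 := by
          field_simp
        have h2 : ‖g' y‖ ≤ 1/r * (y * G y ^ 2) + 1 := by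
          rw [Real.norm_eq_abs]
          linarith [hg'G y, h3, h4.le]
        calc ENNReal.ofReal ‖g' y‖ ≤ ENNReal.ofReal (1/r * (y * G y ^ 2) + 1) :=
              ENNReal.ofReal_le_ofReal h2
          _ ≤ ENNReal.ofReal (1/r * (y * G y ^ 2)) + ENNReal.ofReal 1 :=
              ENNReal.ofReal_add_le
          _ = ENNReal.ofReal (1/r) * ENNReal.ofReal (y * G y ^ 2) + 1 := by
              rw [ENNReal.ofReal_mul (by positivity), ENNReal.ofReal_one]
      calc ∫⁻ y in Ioc r R, ENNReal.ofReal ‖g' y‖ ≤ _ := hle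
        _ = ENNReal.ofReal (1/r) * (∫⁻ y in Ioc r R, ENNReal.ofReal (y * G y ^ 2))
              + volume (Ioc r R) := by
            rw [lintegral_add_right _ measurable_const,
              lintegral_const_mul' _ _ ENNReal.ofReal_ne_top, setLIntegral_const, one_mul]
        _ ≤ ENNReal.ofReal (1/r) * bb + ENNReal.ofReal (R - r) := by
            rw [Real.volume_Ioc]
            gcongr
            exact lintegral_mono_set (fun y hy => lt_trans hr hy.1)
        _ < ⊤ := by
            refine ENNReal.add_lt_top.2 ⟨?_, ENNReal.ofReal_lt_top⟩
            exact ENNReal.mul_lt_top ENNReal.ofReal_lt_top (lt_top_iff_ne_top.2 hbbfin)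
    -- fundamental theorem of calculus bound
    have hFTC : ∀ R : ℝ, r < R → |g r ^ 2 - g R ^ 2| ≤ W.toReal := by
      intro R hR
      have hInt2 : IntervalIntegrable (fun s => 2 * g s * g' s) volume r R := by
        have h := (hg'int R hR.le).continuousOn_mul
          (g := fun s => 2 * g s) (by fun_prop)
        simpa [mul_assoc] using h
      have hderiv2 : ∀ s ∈ uIcc r R, HasDerivAt (fun t => g t ^ 2) (2 * g s * g' s) s := by
        intro s _
        have := (hgderiv s).pow 2
        norm_num at this
        exact this
      have hftc := intervalIntegral.integral_eq_sub_of_hasDerivAt hderiv2 hInt2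
      have habs : |g r ^ 2 - g R ^ 2| ≤ ∫ s in r..R, |2 * g s * g' s| := by
        rw [abs_sub_comm, ← hftc]
        exact intervalIntegral.abs_integral_le_integral_abs hR.le
      have heq : ∫ s in r..R, |2 * g s * g' s| =
          (∫⁻ s in Ioc r R, ENNReal.ofReal |2 * g s * g' s|).toReal := by
        rw [intervalIntegral.integral_of_le hR.le]
        rw [integral_eq_lintegral_of_nonneg_ae (f := fun s => |2 * g s * g' s|) (Filter.Eventually.of_forall fun s => abs_nonneg _)
          (((hgcont.measurable.const_mul 2).mul hg'meas).abs.aestronglyMeasurable :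
            AEStronglyMeasurable (fun s => |2 * g s * g' s|) _)]
      have hlin : (∫⁻ s in Ioc r R, ENNReal.ofReal |2 * g s * g' s|) ≤ W := by
        have hmono : ∫⁻ s in Ioc r R, ENNReal.ofReal |2 * g s * g' s| ≤
            ∫⁻ s in Ioc r R, ENNReal.ofReal (1/r) *
              (ENNReal.ofReal (s * g s ^ 2) + ENNReal.ofReal (s * G s ^ 2)) := by
          refine setLIntegral_mono ((hmg.add hmG).const_mul _) ?_
          intro y hy
          have hry : r < y := hy.1
          have hy0 : 0 < y := lt_trans hr hry
          have hb1 : |2 * g y * g' y| * r ≤ y * g y ^ 2 + y * G y ^ 2 := by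
            rw [abs_mul, abs_mul, abs_two]
            have e1 : 2 * |g y| * |g' y| ≤ 2 * |g y| * G y :=
              mul_le_mul_of_nonneg_left (hg'G y) (by positivity)
            have e2 : 2 * |g y| * G y ≤ g y ^ 2 + G y ^ 2 := by
              nlinarith [sq_nonneg (|g y| - G y), sq_abs (g y)]
            have e3 : (g y ^ 2 + G y ^ 2) * r ≤ (g y ^ 2 + G y ^ 2) * y :=
              mul_le_mul_of_nonneg_left hry.le (by positivity)
            have e4 := mul_le_mul_of_nonneg_right e1 hr.le
            have e5 := mul_le_mul_of_nonneg_right e2 hr.le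
            nlinarith [e3, e4, e5]
          have hb2 : |2 * g y * g' y| ≤ 1/r * (y * g y ^ 2 + y * G y ^ 2) := by
            rw [div_mul_eq_mul_div, one_mul, le_div_iff₀ hr]
            exact hb1
          calc ENNReal.ofReal |2 * g y * g' y| ≤
                ENNReal.ofReal (1/r * (y * g y ^ 2 + y * G y ^ 2)) :=
                ENNReal.ofReal_le_ofReal hb2
            _ = ENNReal.ofReal (1/r) * (ENNReal.ofReal (y * g y ^ 2)
                  + ENNReal.ofReal (y * G y ^ 2)) := by
                rw [ENNReal.ofReal_mul (by positivity), ENNReal.ofReal_add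
                  (by positivity) (by positivity)]
        refine le_trans hmono ?_
        rw [lintegral_const_mul' _ _ ENNReal.ofReal_ne_top]
        rw [hWdef]
        gcongr
        rw [lintegral_add_right _ hmG]
        have hsub : Ioc r R ⊆ Ioi (0:ℝ) := fun y hy => lt_trans hr hy.1
        exact add_le_add (lintegral_mono_set hsub) (lintegral_mono_set hsub)
      calc |g r ^ 2 - g R ^ 2| ≤ ∫ s in r..R, |2 * g s * g' s| := habs
        _ = (∫⁻ s in Ioc r R, ENNReal.ofReal |2 * g s * g' s|).toReal := heq
        _ ≤ W.toReal := ENNReal.toReal_mono hWfin hlin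
    -- along a sequence, g tends to zero
    have hexists : ∀ ε : ℝ, 0 < ε → ∃ R, r < R ∧ g R ^ 2 < ε := by
      intro ε hε
      by_contra hcon
      push_neg at hcon
      set m : ℝ := max r 1 with hm
      have hm0 : 0 < m := lt_of_lt_of_le hr (le_max_left _ _)
      have htop : (⊤ : ENNReal) ≤ a := by
        calc (⊤ : ENNReal) = ENNReal.ofReal (m * ε) * volume (Ioi m) := by
              rw [Real.volume_Ioi, ENNReal.mul_top
                (ENNReal.ofReal_pos.2 (by positivity)).ne']
          _ = ∫⁻ _ in Ioi m, ENNReal.ofReal (m * ε) := by rw [setLIntegral_const]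
          _ ≤ ∫⁻ y in Ioi m, ENNReal.ofReal (y * g y ^ 2) := by
              refine setLIntegral_mono hmg ?_
              intro y hy
              have hmy : m < y := hy
              have hεy : ε ≤ g y ^ 2 := hcon y (lt_of_le_of_lt (le_max_left r 1) hmy)
              refine ENNReal.ofReal_le_ofReal ?_
              calc m * ε ≤ y * ε := by nlinarith
                _ ≤ y * g y ^ 2 := by nlinarith [lt_trans hm0 hmy]
          _ ≤ a := lintegral_mono_set (fun y hy => lt_trans hm0 hy)
      exact hafin (top_le_iff.mp htop)
    -- conclude the pointwise bound
    have hg2 : g r ^ 2 ≤ W.toReal := by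
      refine le_of_forall_pos_lt_add fun ε hε => ?_
      obtain ⟨R, hrR, hRε⟩ := hexists (ε/2) (by positivity)
      have h3 := hFTC R hrR
      have h4 := le_abs_self (g r ^ 2 - g R ^ 2)
      nlinarith
    have hWtoReal : W.toReal = 1/r * (a + bb).toReal := by
      rw [hWdef, ENNReal.toReal_mul, ENNReal.toReal_ofReal (by positivity)]
    calc r * g r ^ 2 ≤ r * W.toReal := by
          exact mul_le_mul_of_nonneg_left hg2 hr.le
      _ = (a + bb).toReal := by
          rw [hWtoReal]; field_simp
  -- assemble
  have hH1 : H1Norm u ^ 2 = A.toReal + B.toReal := by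
    rw [H1Norm, Real.sq_sqrt (by positivity), (elp_sq u μ hu2).2,
      (elp_sq (fun z => ‖fderiv ℝ u z‖) μ hdu2).2]
  have habR : (a + bb).toReal ≤ straussK * H1Norm u ^ 2 := by
    have hcR : 0 < c.toReal := csphere_pos
    have hAc : A.toReal = c.toReal * a.toReal := by rw [hApolar, ENNReal.toReal_mul]
    have hBc : B.toReal = c.toReal * bb.toReal := by rw [hBpolar, ENNReal.toReal_mul]
    have hab : (a + bb).toReal = a.toReal + bb.toReal := ENNReal.toReal_add hafin hbbfin
    rw [hab, hH1, straussK]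
    rw [show ((volume : Measure (EuclideanSpace ℝ (Fin 2))).toSphere Set.univ).toReal
      = c.toReal from rfl]
    rw [hAc, hBc]
    rw [div_mul_eq_mul_div, le_div_iff₀ hcR]
    nlinarith [ENNReal.toReal_nonneg (a := a), ENNReal.toReal_nonneg (a := bb)]
  rcases eq_or_lt_of_le (norm_nonneg x) with h0 | h0
  · rw [← h0]
    have : 0 < straussK * H1Norm u ^ 2 ∨ 0 ≤ straussK * H1Norm u ^ 2 := by
      right
      exact le_trans ENNReal.toReal_nonneg habR
    simpa using le_trans ENNReal.toReal_nonneg habR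
  · rw [hgx x]
    exact le_trans (key ‖x‖ h0) habR

set_option maxHeartbeats 2000000 in
theorem stmt_11 (b α : ℝ) (hb0 : 0 < b) (hb : b ≤ 1) (hα : 0 < α) :
    ∃ C : ℝ, 0 < C ∧ ∀ u : EuclideanSpace ℝ (Fin 2) → ℝ,
      (∀ x y, ‖x‖ = ‖y‖ → u x = u y) →
      Differentiable ℝ u →
      MemLp u 2 volume →
      MemLp (fun x => ‖fderiv ℝ u x‖) 2 volume →
      ∀ᵐ x : EuclideanSpace ℝ (Fin 2),
        ‖x‖ ^ b * |Real.exp (u x) - 1 - u x| ≤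
          C * (H1Norm u) ^ (2 * b) *
            (|u x| ^ (2 * (1 - b)) + Real.exp (α * (u x) ^ 2) - 1) := by
  have hden : 0 < 1 - Real.exp (-(α/2)) := by
    have h1 : Real.exp (-(α/2)) < 1 := by
      rw [Real.exp_lt_one_iff]; linarith
    linarith
  set C0 : ℝ := 1 + 3 * Real.exp (1/(2*α)) / (1 - Real.exp (-(α/2))) with hC0
  have hC0pos : 0 < C0 := by positivity
  have hC0one : 1 ≤ C0 := by
    rw [hC0]
    have : 0 ≤ 3 * Real.exp (1/(2*α)) / (1 - Real.exp (-(α/2))) := by positivity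
    linarith
  set D : ℝ := max 1 straussK with hD
  have hDpos : 0 < D := lt_of_lt_of_le one_pos (le_max_left _ _)
  refine ⟨D * C0, by positivity, ?_⟩
  intro u hrad hu hu2 hdu2
  refine Filter.Eventually.of_forall fun x => ?_
  set t : ℝ := u x with htdef
  set H : ℝ := H1Norm u with hHdef
  have hHnn : 0 ≤ H := Real.sqrt_nonneg _
  have hSt : ‖x‖ * t ^ 2 ≤ straussK * H ^ 2 := strauss u hrad hu hu2 hdu2 x
  have hRHSnn : 0 ≤ |t| ^ (2*(1-b)) + Real.exp (α * t^2) - 1 := by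
    have h1 : (0:ℝ) ≤ |t| ^ (2*(1-b)) := Real.rpow_nonneg (abs_nonneg t) _
    have h2 : 1 ≤ Real.exp (α * t^2) := Real.one_le_exp (by positivity)
    linarith
  have hRHS0 : 0 ≤ D * C0 * H ^ (2*b) * (|t| ^ (2*(1-b)) + Real.exp (α * t^2) - 1) :=
    mul_nonneg (mul_nonneg (by positivity) (Real.rpow_nonneg hHnn _)) hRHSnn
  by_cases hx0 : ‖x‖ = 0
  · rw [hx0, Real.zero_rpow hb0.ne', zero_mul]
    exact hRHS0
  by_cases ht0 : t = 0
  · have hz : Real.exp t - 1 - t = 0 := by rw [ht0]; simp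
    rw [hz, abs_zero, mul_zero]
    exact hRHS0
  -- main case
  have hxpos : 0 < ‖x‖ := (norm_nonneg x).lt_of_ne (Ne.symm hx0)
  have ht2 : (0:ℝ) < t^2 := by positivity
  have habs : 0 < |t| := abs_pos.2 ht0
  have hH2 : 0 < straussK * H^2 := lt_of_lt_of_le (by positivity) hSt
  have hHpos : 0 < H := by
    rcases eq_or_lt_of_le hHnn with h | h
    · exfalso; rw [← h] at hH2; simp at hH2
    · exact h
  set P : ℝ := |t| ^ (2*b) with hP
  have hPpos : 0 < P := Real.rpow_pos_of_pos habs _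
  -- the geometric bound
  have hxle : ‖x‖ ≤ straussK * H^2 / t^2 := by
    rw [le_div_iff₀ ht2]; linarith [hSt]
  have hrp : ‖x‖ ^ b ≤ (straussK * H^2 / t^2) ^ b :=
    Real.rpow_le_rpow (norm_nonneg x) hxle hb0.le
  have hsplit : (straussK * H^2 / t^2) ^ b = straussK ^ b * H ^ (2*b) / P := by
    rw [Real.div_rpow (by positivity) (sq_nonneg t),
      Real.mul_rpow straussK_pos.le (sq_nonneg H)]
    congr 1
    · congr 1
      rw [← Real.rpow_natCast H 2, ← Real.rpow_mul hHnn]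
      norm_num
    · rw [hP, ← sq_abs t, ← Real.rpow_natCast |t| 2, ← Real.rpow_mul (abs_nonneg t)]
      norm_num
  have hDb : straussK ^ b ≤ D := by
    rcases le_total straussK 1 with h | h
    · exact le_trans (Real.rpow_le_one straussK_pos.le h hb0.le) (le_max_left _ _)
    · refine le_trans (Real.rpow_le_rpow_of_exponent_le h hb) ?_
      rw [Real.rpow_one]; exact le_max_right _ _
  -- the scalar inequality
  have hcore : |Real.exp t - 1 - t| ≤
      C0 * P * (|t| ^ (2*(1-b)) + Real.exp (α * t^2) - 1) := by
    have hexpm1 : 0 ≤ Real.exp (α * t^2) - 1 := by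
      have := Real.one_le_exp (by positivity : 0 ≤ α * t^2); linarith
    rcases le_total |t| 1 with hT | hT
    · -- small t
      have hsq : |Real.exp t - 1 - t| ≤ t ^ 2 := by
        have h := Real.norm_exp_sub_one_sub_id_le (x := t) (by rwa [Real.norm_eq_abs])
        rw [Real.norm_eq_abs, Real.norm_eq_abs, sq_abs] at h
        exact h
      have hfact : t ^ 2 = P * |t| ^ (2*(1-b)) := by
        rw [hP, ← Real.rpow_add habs]
        rw [show 2*b + 2*(1-b) = (2:ℝ) by ring]
        rw [show (2:ℝ) = ((2:ℕ):ℝ) by norm_num, Real.rpow_natCast, sq_abs]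
      calc |Real.exp t - 1 - t| ≤ t ^ 2 := hsq
        _ = P * |t| ^ (2*(1-b)) := hfact
        _ ≤ P * (|t| ^ (2*(1-b)) + (Real.exp (α * t^2) - 1)) := by
            refine mul_le_mul_of_nonneg_left ?_ hPpos.le
            linarith
        _ ≤ C0 * P * (|t| ^ (2*(1-b)) + Real.exp (α * t^2) - 1) := by
            rw [show C0 * P = P * C0 by ring, mul_assoc]
            refine mul_le_mul_of_nonneg_left ?_ hPpos.le
            nlinarith [hRHSnn, hC0one]
    · -- large t
      have hP1 : 1 ≤ P := Real.one_le_rpow hT (by positivity)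
      have h1 : |Real.exp t - 1 - t| ≤ 3 * Real.exp |t| := by
        have e1 : Real.exp t ≤ Real.exp |t| := Real.exp_le_exp.2 (le_abs_self t)
        have e2 : (1:ℝ) ≤ Real.exp |t| := Real.one_le_exp (abs_nonneg t)
        have e3 : |t| ≤ Real.exp |t| := by linarith [Real.add_one_le_exp |t|]
        have e4 : |Real.exp t - 1 - t| ≤ |Real.exp t - 1| + |t| := by
          calc |Real.exp t - 1 - t| ≤ |Real.exp t - 1| + |-t| := by
                rw [sub_eq_add_neg (Real.exp t - 1) t]; exact abs_add_le _ _
            _ = |Real.exp t - 1| + |t| := by rw [abs_neg]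
        have e5 : |Real.exp t - 1| ≤ Real.exp |t| + 1 := by
          rw [abs_sub_comm]
          calc |1 - Real.exp t| ≤ 1 + Real.exp t := by
                rw [sub_eq_add_neg]
                refine le_trans (abs_add_le _ _) ?_
                simp [abs_of_pos (Real.exp_pos t)]
            _ ≤ Real.exp |t| + 1 := by linarith
        linarith
      have h2 : Real.exp |t| ≤ Real.exp (1/(2*α)) * Real.exp (α*t^2/2) := by
        rw [← Real.exp_add]
        refine Real.exp_le_exp.2 ?_
        have k1 : 2*α*|t| ≤ α^2*t^2 + 1 := by nlinarith [sq_nonneg (α*|t| - 1), sq_abs t]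
        have k2 : |t| ≤ (α^2*t^2+1)/(2*α) := by
          rw [le_div_iff₀ (by positivity)]; linarith
        have k3 : (α^2*t^2+1)/(2*α) = 1/(2*α) + α*t^2/2 := by
          field_simp; ring
        linarith [k2, k3.le]
      have ht1 : 1 ≤ t^2 := by nlinarith [sq_abs t]
      have h3 : Real.exp (α*t^2/2) * (1 - Real.exp (-(α/2))) ≤ Real.exp (α*t^2) - 1 := by
        have m3 : Real.exp (α*t^2/2) ≤ Real.exp (α*t^2) := Real.exp_le_exp.2 (by nlinarith)
        have m1 : Real.exp (α*t^2) * Real.exp (-(α/2)) = Real.exp (α*t^2 - α/2) := by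
          rw [← Real.exp_add]; ring_nf
        have m2 : (1:ℝ) ≤ Real.exp (α*t^2 - α/2) := Real.one_le_exp (by nlinarith)
        have m4 := mul_le_mul_of_nonneg_right m3 hden.le
        nlinarith [m1, m2, m4]
      -- combine
      have h4 : |Real.exp t - 1 - t| ≤
          3 * Real.exp (1/(2*α)) / (1 - Real.exp (-(α/2))) * (Real.exp (α*t^2) - 1) := by
        have h5 : Real.exp (α*t^2/2) ≤ (Real.exp (α*t^2) - 1) / (1 - Real.exp (-(α/2))) := by
          rw [le_div_iff₀ hden]; exact h3
        calc |Real.exp t - 1 - t| ≤ 3 * Real.exp |t| := h1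
          _ ≤ 3 * (Real.exp (1/(2*α)) * Real.exp (α*t^2/2)) := by linarith
          _ ≤ 3 * (Real.exp (1/(2*α)) * ((Real.exp (α*t^2) - 1) / (1 - Real.exp (-(α/2))))) := by
              refine mul_le_mul_of_nonneg_left ?_ (by norm_num)
              exact mul_le_mul_of_nonneg_left h5 (Real.exp_pos _).le
          _ = 3 * Real.exp (1/(2*α)) / (1 - Real.exp (-(α/2))) * (Real.exp (α*t^2) - 1) := by
              field_simp
      have h6 : 3 * Real.exp (1/(2*α)) / (1 - Real.exp (-(α/2))) ≤ C0 := by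
        rw [hC0]; linarith
      have h7 : Real.exp (α*t^2) - 1 ≤ |t| ^ (2*(1-b)) + Real.exp (α * t^2) - 1 := by
        have : (0:ℝ) ≤ |t| ^ (2*(1-b)) := Real.rpow_nonneg (abs_nonneg t) _
        linarith
      calc |Real.exp t - 1 - t| ≤
            3 * Real.exp (1/(2*α)) / (1 - Real.exp (-(α/2))) * (Real.exp (α*t^2) - 1) := h4
        _ ≤ C0 * (Real.exp (α*t^2) - 1) := mul_le_mul_of_nonneg_right h6 hexpm1
        _ ≤ C0 * (|t| ^ (2*(1-b)) + Real.exp (α * t^2) - 1) :=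
            mul_le_mul_of_nonneg_left h7 hC0pos.le
        _ ≤ C0 * P * (|t| ^ (2*(1-b)) + Real.exp (α * t^2) - 1) := by
            have hmm := mul_le_mul_of_nonneg_right
              (mul_le_mul_of_nonneg_left hP1 hC0pos.le) hRHSnn
            linarith [hmm]
  -- assemble
  calc ‖x‖ ^ b * |Real.exp t - 1 - t|
      ≤ (straussK ^ b * H ^ (2*b) / P) * (C0 * P * (|t| ^ (2*(1-b)) + Real.exp (α * t^2) - 1)) := by
        refine mul_le_mul ?_ hcore (abs_nonneg _) ?_
        · rw [← hsplit]; exact hrp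
        · exact div_nonneg (mul_nonneg (Real.rpow_nonneg straussK_pos.le _)
            (Real.rpow_nonneg hHnn _)) hPpos.le
    _ = straussK ^ b * C0 * H ^ (2*b) * (|t| ^ (2*(1-b)) + Real.exp (α * t^2) - 1) := by
        field_simp
    _ ≤ D * C0 * H ^ (2*b) * (|t| ^ (2*(1-b)) + Real.exp (α * t^2) - 1) := by
        have hfac : 0 ≤ C0 * H ^ (2*b) * (|t| ^ (2*(1-b)) + Real.exp (α * t^2) - 1) :=
          mul_nonneg (mul_nonneg hC0pos.le (Real.rpow_nonneg hHnn _)) hRHSnn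
        nlinarith [hDb, hfac, mul_le_mul_of_nonneg_right hDb hfac]
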